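/- Let B be SPD and u* ≠ 0. Then the supremum of vᵀB⁻¹u*/(‖v‖_{B⁻¹}‖u*‖_{B⁻¹}) over nonzero vectors v with vᵀu* = 0 equals cos φ, where sin φ = ‖u*‖²/(‖u*‖_B‖u*‖_{B⁻¹}) and φ ∈ (0,π/2]. -/

import Mathlib

open Matrix

-- symmetry of the bilinear form
lemma myQ_symm {n : ℕ} {A : Matrix (Fin n) (Fin n) ℝ} (hA : Aᵀ = A) (x y : Fin n → ℝ) :
    x ⬝ᵥ A *ᵥ y = y ⬝ᵥ A *ᵥ x := by
  rw [dotProduct_mulVec, ← mulVec_transpose, hA, dotProduct_comm]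

-- Cauchy-Schwarz for a positive semidefinite real matrix
lemma myCS {n : ℕ} {A : Matrix (Fin n) (Fin n) ℝ} (hA : A.PosDef) (x y : Fin n → ℝ) :
    (x ⬝ᵥ A *ᵥ y) ^ 2 ≤ (x ⬝ᵥ A *ᵥ x) * (y ⬝ᵥ A *ᵥ y) := by
  have hAt : Aᵀ = A := by
    have := hA.1; rwa [Matrix.IsHermitian, conjTranspose_eq_transpose_of_trivial] at this
  by_cases hy : y = 0
  · simp [hy]
  have hc : 0 < y ⬝ᵥ A *ᵥ y := by simpa using hA.dotProduct_mulVec_pos hy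
  set a := x ⬝ᵥ A *ᵥ x
  set b := x ⬝ᵥ A *ᵥ y
  set c := y ⬝ᵥ A *ᵥ y
  have key : 0 ≤ c^2 * a - c * b^2 := by
    have h := hA.posSemidef.dotProduct_mulVec_nonneg (c • x + (-b) • y)
    simp only [star_trivial] at h
    have expand : (c • x + (-b) • y) ⬝ᵥ A *ᵥ (c • x + (-b) • y) = c^2 * a - c * b^2 + (b^2*c - c*b^2) := by
      simp only [mulVec_add, mulVec_smul, dotProduct_add, add_dotProduct,
        dotProduct_smul, smul_dotProduct, smul_eq_mul]
      have hba : y ⬝ᵥ A *ᵥ x = b := myQ_symm hAt y x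
      rw [hba]; ring
    rw [expand] at h; linarith
  nlinarith [key, hc]

theorem stmt_5 {n : ℕ} (hn : 1 < n)
    (B : Matrix (Fin n) (Fin n) ℝ) (hB : B.PosDef)
    (u : Fin n → ℝ) (hu : u ≠ 0)
    (φ : ℝ)
    (hφ : φ = Real.arcsin
      ((u ⬝ᵥ u) / (Real.sqrt (u ⬝ᵥ B.mulVec u) * Real.sqrt (u ⬝ᵥ B⁻¹.mulVec u)))) :
    IsGreatest
      {r : ℝ | ∃ v : Fin n → ℝ, v ≠ 0 ∧ v ⬝ᵥ u = 0 ∧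
        r = (v ⬝ᵥ B⁻¹.mulVec u) /
          (Real.sqrt (v ⬝ᵥ B⁻¹.mulVec v) * Real.sqrt (u ⬝ᵥ B⁻¹.mulVec u))}
      (Real.cos φ) := by
  have hA : (B⁻¹).PosDef := hB.inv
  set A := B⁻¹ with hAdef
  have hAt : Aᵀ = A := by
    have := hA.1; rwa [Matrix.IsHermitian, conjTranspose_eq_transpose_of_trivial] at this
  have hBt : Bᵀ = B := by
    have := hB.1; rwa [Matrix.IsHermitian, conjTranspose_eq_transpose_of_trivial] at this
  have hAB : A * B = 1 := Matrix.nonsing_inv_mul B (isUnit_iff_ne_zero.mpr hB.det_pos.ne')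
  set α := u ⬝ᵥ u with hαdef
  set β := u ⬝ᵥ B *ᵥ u with hβdef
  set γ := u ⬝ᵥ A *ᵥ u with hγdef
  have hα : 0 < α := by
    have : α = u ⬝ᵥ (1 : Matrix (Fin n) (Fin n) ℝ) *ᵥ u := by rw [one_mulVec]
    rw [this]
    simpa using (Matrix.PosDef.one (n := Fin n) (R := ℝ)).dotProduct_mulVec_pos hu
  have hβ : 0 < β := by simpa using hB.dotProduct_mulVec_pos hu
  have hγ : 0 < γ := by simpa using hA.dotProduct_mulVec_pos hu
  set w := B *ᵥ u with hwdef
  have hQw : ∀ v : Fin n → ℝ, v ⬝ᵥ A *ᵥ w = v ⬝ᵥ u := by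
    intro v; rw [hwdef, mulVec_mulVec, hAB, one_mulVec]
  have hwu : w ⬝ᵥ u = β := by rw [hwdef, dotProduct_comm, hβdef]
  have huw_dot : u ⬝ᵥ w = β := by rw [dotProduct_comm, hwu]
  have hQuw : u ⬝ᵥ A *ᵥ w = α := hQw u
  have hQww : w ⬝ᵥ A *ᵥ w = β := by rw [hQw w, hwu]
  set p := u - (α / β) • w with hpdef
  have hpu : p ⬝ᵥ u = 0 := by
    rw [hpdef, sub_dotProduct, smul_dotProduct, hwu, smul_eq_mul, ← hαdef]
    field_simp
    ring
  set δ := γ - α ^ 2 / β with hδdef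
  have hQup : u ⬝ᵥ A *ᵥ p = δ := by
    rw [hpdef, mulVec_sub, mulVec_smul, dotProduct_sub, dotProduct_smul, hQuw, smul_eq_mul,
      hδdef, ← hγdef]
    field_simp
  have hQpu : p ⬝ᵥ A *ᵥ u = δ := by rw [myQ_symm hAt, hQup]
  have hQpw : p ⬝ᵥ A *ᵥ w = 0 := by rw [hQw p, hpu]
  have hQpp : p ⬝ᵥ A *ᵥ p = δ := by
    rw [hpdef, sub_dotProduct, smul_dotProduct, smul_eq_mul]
    have h1 : u ⬝ᵥ A *ᵥ (u - (α / β) • w) = δ := by rw [← hpdef, hQup]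
    have h2 : w ⬝ᵥ A *ᵥ (u - (α / β) • w) = 0 := by
      rw [← hpdef, myQ_symm hAt, hQpw]
    rw [h1, h2, mul_zero, sub_zero]
  have hδ0 : 0 ≤ δ := by
    have := hA.posSemidef.dotProduct_mulVec_nonneg p
    simp only [star_trivial] at this
    rwa [hQpp] at this
  -- Cauchy–Schwarz : α² ≤ β γ
  have hαβγ : α ^ 2 ≤ β * γ := by
    have := myCS hA u w
    rw [hQuw, hQww, ← hγdef] at this
    linarith [this]
  -- the value of cos φ
  have hsqβγ : Real.sqrt β * Real.sqrt γ = Real.sqrt (β * γ) :=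
    (Real.sqrt_mul hβ.le γ).symm
  have hcos : Real.cos φ = Real.sqrt δ / Real.sqrt γ := by
    rw [hφ, Real.cos_arcsin]
    have h1 : 1 - (α / (Real.sqrt β * Real.sqrt γ)) ^ 2 = δ / γ := by
      rw [div_pow, mul_pow, Real.sq_sqrt hβ.le, Real.sq_sqrt hγ.le, hδdef]
      field_simp
    rw [h1, Real.sqrt_div hδ0 γ]
  constructor
  · -- membership
    by_cases hp : p = 0
    · -- u is an eigenvector case: cos φ = 0
      have hδz : δ = 0 := by rw [← hQpp, hp]; simp
      obtain ⟨i, hi⟩ := Function.ne_iff.mp hu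
      have hi' : u i ≠ 0 := by simpa using hi
      obtain ⟨j, hj⟩ := Fintype.exists_ne_of_one_lt_card (by simpa using hn) i
      set v : Fin n → ℝ := u i • (Pi.single j 1 : Fin n → ℝ)
        - u j • (Pi.single i 1 : Fin n → ℝ) with hvdef
      have hv0 : v ≠ 0 := by
        intro h
        have := congrFun h j
        simp [hvdef, Pi.single_eq_of_ne hj, hi'] at this
      have hvu : v ⬝ᵥ u = 0 := by
        simp only [hvdef, sub_dotProduct, smul_dotProduct, single_dotProduct, smul_eq_mul,
          one_mul]
        ring
      refine ⟨v, hv0, hvu, ?_⟩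
      have hueq : u = (α / β) • w := by
        have := sub_eq_zero.mp ((hpdef.symm.trans hp))
        exact this
      have hnum : v ⬝ᵥ A *ᵥ u = 0 := by
        conv_lhs => rw [hueq]
        rw [mulVec_smul, dotProduct_smul, hQw v, hvu, smul_eq_mul, mul_zero]
      rw [hcos, hδz, hnum, Real.sqrt_zero, zero_div, zero_div]
    · refine ⟨p, hp, hpu, ?_⟩
      have hδpos : 0 < δ := by rw [← hQpp]; simpa using hA.dotProduct_mulVec_pos hp
      have hsγ : 0 < Real.sqrt γ := Real.sqrt_pos.mpr hγ
      have hsδ : 0 < Real.sqrt δ := Real.sqrt_pos.mpr hδpos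
      rw [hQpu, hQpp, hcos, div_eq_div_iff hsγ.ne' (by positivity)]
      rw [← mul_assoc, Real.mul_self_sqrt hδ0]
  · rintro r ⟨v, hv0, hvu, rfl⟩
    have hQvv : 0 < v ⬝ᵥ A *ᵥ v := by simpa using hA.dotProduct_mulVec_pos hv0
    have hQvw : v ⬝ᵥ A *ᵥ w = 0 := by rw [hQw v, hvu]
    have hQvu : v ⬝ᵥ A *ᵥ u = v ⬝ᵥ A *ᵥ p := by
      rw [hpdef, mulVec_sub, mulVec_smul, dotProduct_sub, dotProduct_smul, hQvw, smul_eq_mul,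
        mul_zero, sub_zero]
    have hCS : (v ⬝ᵥ A *ᵥ p) ^ 2 ≤ (v ⬝ᵥ A *ᵥ v) * δ := by
      have := myCS hA v p; rwa [hQpp] at this
    have hle : v ⬝ᵥ A *ᵥ u ≤ Real.sqrt (v ⬝ᵥ A *ᵥ v) * Real.sqrt δ := by
      rw [hQvu]
      calc v ⬝ᵥ A *ᵥ p ≤ |v ⬝ᵥ A *ᵥ p| := le_abs_self _
        _ = Real.sqrt ((v ⬝ᵥ A *ᵥ p) ^ 2) := (Real.sqrt_sq_eq_abs _).symm
        _ ≤ Real.sqrt ((v ⬝ᵥ A *ᵥ v) * δ) := Real.sqrt_le_sqrt hCS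
        _ = Real.sqrt (v ⬝ᵥ A *ᵥ v) * Real.sqrt δ := Real.sqrt_mul hQvv.le δ
    rw [hcos]
    have hsv : 0 < Real.sqrt (v ⬝ᵥ A *ᵥ v) := Real.sqrt_pos.mpr hQvv
    have hsγ : 0 < Real.sqrt γ := Real.sqrt_pos.mpr hγ
    rw [div_le_div_iff₀ (by positivity) hsγ]
    calc (v ⬝ᵥ A *ᵥ u) * Real.sqrt γ
        ≤ (Real.sqrt (v ⬝ᵥ A *ᵥ v) * Real.sqrt δ) * Real.sqrt γ := by
          exact mul_le_mul_of_nonneg_right hle hsγ.le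
      _ = Real.sqrt δ * (Real.sqrt (v ⬝ᵥ A *ᵥ v) * Real.sqrt γ) := by ring
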